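/- Gronwall-type growth estimate for triangular weighted systems: let w₁ ≤ ⋯ ≤ wₙ be positive integers, u ∈ L¹([0,T]), and x: [0,T] → ℝⁿ absolutely continuous with x(0) = 0 and |ẋᵢ(t)| ≤ C |u(t)| ‖x(t)‖^{wᵢ − 1} for a.e. t, where ‖z‖ = Σⱼ |zⱼ|^{1/wⱼ}. Then there exists C′ > 0 (depending only on C, n, and the weights) such that ‖x(t)‖ ≤ C′ ∫₀ᵗ |u(s)| ds for all t, provided ∫₀ᵀ |u| ds is small enough. -/

import Mathlib

open MeasureTheory Set

/-- Gronwall-type growth estimate for triangular weighted systems: if `x(0) = 0`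
and `|ẋᵢ(t)| ≤ C |u(t)| ‖x(t)‖^{wᵢ−1}` with `‖z‖ = Σⱼ |zⱼ|^{1/wⱼ}`, then there
are `ε₀, C′ > 0` (depending only on `C`, `n` and the weights) such that
`‖x(t)‖ ≤ C′ ∫₀ᵗ |u(s)| ds` whenever `∫₀ᵀ |u| ≤ ε₀`. -/
theorem stmt14 (n : ℕ) (w : Fin n → ℕ) (hw : ∀ i, 1 ≤ w i)
    (hmono : ∀ i j : Fin n, i ≤ j → w i ≤ w j) (C : ℝ) (hC : 0 < C) :
    ∃ ε₀ : ℝ, 0 < ε₀ ∧ ∃ C' : ℝ, 0 < C' ∧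
      ∀ (T : ℝ) (u : ℝ → ℝ) (x x' : ℝ → Fin n → ℝ),
        0 ≤ T →
        IntervalIntegrable (fun t => |u t|) volume 0 T →
        x 0 = 0 →
        (∀ t ∈ Icc (0:ℝ) T, ∀ i,
          HasDerivAt (fun s => x s i) (x' t i) t ∧
          |x' t i| ≤ C * |u t| * (∑ j, |x t j| ^ ((1:ℝ) / w j)) ^ (w i - 1)) →
        (∫ s in (0:ℝ)..T, |u s|) ≤ ε₀ →
        ∀ t ∈ Icc (0:ℝ) T,
          (∑ j, |x t j| ^ ((1:ℝ) / w j)) ≤ C' * ∫ s in (0:ℝ)..t, |u s| := by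
  classical
  set W : ℕ := Finset.univ.sup w with hWdef
  refine ⟨1, one_pos, C * (n + 1) ^ W + 1, by positivity, ?_⟩
  intro T u x x' hT hu hx0 hx _ t ht
  obtain ⟨ht0, htT⟩ := ht
  set f : ℝ → ℝ := fun s => ∑ j, |x s j| ^ ((1:ℝ) / w j) with hfdef
  set φt : ℝ := ∫ s in (0:ℝ)..t, |u s| with hφtdef
  have hφt0 : 0 ≤ φt :=
    intervalIntegral.integral_nonneg ht0 (fun s _ => abs_nonneg _)
  have hsubT : Icc (0:ℝ) t ⊆ Icc 0 T := Icc_subset_Icc le_rfl htT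
  -- continuity of the gauge
  have hfc : ContinuousOn f (Icc 0 t) := by
    apply continuousOn_finset_sum
    intro j _
    apply ContinuousOn.rpow_const
    · apply ContinuousOn.abs
      intro s hs
      exact ((hx s (hsubT hs) j).1.continuousAt).continuousWithinAt
    · intro s _
      right; positivity
  obtain ⟨s₀, hs₀, hmax⟩ :=
    isCompact_Icc.exists_isMaxOn (nonempty_Icc.2 ht0) hfc
  set M : ℝ := f s₀ with hMdef
  have hM0 : 0 ≤ M := by
    apply Finset.sum_nonneg
    intro j _
    positivity
  have hMb : ∀ s ∈ Icc (0:ℝ) t, f s ≤ M := hmax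
  -- the key integral estimate
  have key : ∀ s ∈ Icc (0:ℝ) t, ∀ i, |x s i| ≤ C * φt * M ^ (w i - 1) := by
    intro s hs i
    obtain ⟨hs0, hst⟩ := hs
    have hssubT : Icc (0:ℝ) s ⊆ Icc 0 T :=
      Icc_subset_Icc le_rfl (hst.trans htT)
    have hssubt : Icc (0:ℝ) s ⊆ Icc 0 t := Icc_subset_Icc le_rfl hst
    set B : ℝ := C * M ^ (w i - 1) with hBdef
    have hB0 : 0 ≤ B := by positivity
    have hderivAll : ∀ r ∈ uIcc (0:ℝ) s, HasDerivAt (fun σ => x σ i) (x' r i) r := by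
      intro r hr
      rw [uIcc_of_le hs0] at hr
      exact (hx r (hssubT hr) i).1
    have hb : ∀ r ∈ Icc (0:ℝ) s, |x' r i| ≤ B * |u r| := by
      intro r hr
      have h1 := (hx r (hssubT hr) i).2
      have h2 : (f r) ^ (w i - 1) ≤ M ^ (w i - 1) := by
        apply pow_le_pow_left₀ _ (hMb r (hssubt hr))
        apply Finset.sum_nonneg; intro j _; positivity
      calc |x' r i| ≤ C * |u r| * (f r) ^ (w i - 1) := h1
        _ ≤ C * |u r| * M ^ (w i - 1) := by
            apply mul_le_mul_of_nonneg_left h2 (by positivity)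
        _ = B * |u r| := by ring
    have huS : IntervalIntegrable (fun r => |u r|) volume 0 s :=
      hu.mono_set (by rw [uIcc_of_le hs0, uIcc_of_le hT]; exact Icc_subset_Icc le_rfl (hst.trans htT))
    have hbig : IntervalIntegrable (fun r => B * |u r|) volume 0 s := huS.const_mul B
    have hmeas : AEStronglyMeasurable (fun r => x' r i) (volume.restrict (Set.uIoc (0:ℝ) s)) := by
      have hd : ∀ r ∈ Set.uIoc (0:ℝ) s, deriv (fun σ => x σ i) r = x' r i := by
        intro r hr
        rw [uIoc_of_le hs0] at hr
        exact ((hx r (hssubT (Ioc_subset_Icc_self hr)) i).1).deriv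
      exact ((measurable_deriv (fun σ => x σ i)).aestronglyMeasurable.restrict).congr
        ((ae_restrict_iff' measurableSet_uIoc).2 (Filter.Eventually.of_forall hd))
    have hgint : IntervalIntegrable (fun r => x' r i) volume 0 s := by
      apply hbig.mono_fun hmeas
      apply (ae_restrict_iff' measurableSet_uIoc).2
      apply Filter.Eventually.of_forall
      intro r hr
      rw [uIoc_of_le hs0] at hr
      show ‖x' r i‖ ≤ ‖B * |u r|‖
      rw [Real.norm_eq_abs, Real.norm_eq_abs, abs_of_nonneg (mul_nonneg hB0 (abs_nonneg (u r)))]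
      exact hb r (Ioc_subset_Icc_self hr)
    have hftc : ∫ r in (0:ℝ)..s, x' r i = x s i - x 0 i :=
      intervalIntegral.integral_eq_sub_of_hasDerivAt hderivAll hgint
    have hx0i : x 0 i = 0 := by rw [hx0]; rfl
    have habs : |x s i| ≤ ∫ r in (0:ℝ)..s, |x' r i| := by
      have hxs : x s i = ∫ r in (0:ℝ)..s, x' r i := by rw [hftc, hx0i, sub_zero]
      rw [hxs]
      exact intervalIntegral.abs_integral_le_integral_abs hs0
    have hmono2 : (∫ r in (0:ℝ)..s, |x' r i|) ≤ ∫ r in (0:ℝ)..s, B * |u r| :=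
      intervalIntegral.integral_mono_on hs0 hgint.abs hbig hb
    have hval : (∫ r in (0:ℝ)..s, B * |u r|) = B * ∫ r in (0:ℝ)..s, |u r| :=
      intervalIntegral.integral_const_mul _ _
    have hφ : (∫ r in (0:ℝ)..s, |u r|) ≤ φt := by
      apply intervalIntegral.integral_mono_interval le_rfl hs0 hst
      · exact Filter.Eventually.of_forall (fun r => abs_nonneg _)
      · exact hu.mono_set (by rw [uIcc_of_le ht0, uIcc_of_le hT]; exact Icc_subset_Icc le_rfl htT)
    calc |x s i| ≤ B * ∫ r in (0:ℝ)..s, |u r| := by rw [← hval]; exact habs.trans hmono2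
      _ ≤ B * φt := mul_le_mul_of_nonneg_left hφ hB0
      _ = C * φt * M ^ (w i - 1) := by ring
  -- bound M by the sum of the integrated bounds
  have hMsum : M ≤ ∑ j, (C * φt * M ^ (w j - 1)) ^ ((1:ℝ) / w j) := by
    rw [hMdef]
    apply Finset.sum_le_sum
    intro j _
    exact Real.rpow_le_rpow (abs_nonneg _) (key s₀ hs₀ j) (by positivity)
  have hft : f t ≤ M := hMb t ⟨ht0, le_rfl⟩
  have hgoal : M ≤ (C * (n + 1) ^ W + 1) * φt := by
    rcases eq_or_lt_of_le hM0 with hM | hMpos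
    · rw [← hM]; positivity
    · have hn : n ≠ 0 := by
        rintro rfl
        rw [hMdef, hfdef] at hMpos
        simp at hMpos
      have hnpos : (0:ℝ) < n := by positivity
      have hex : ∃ j : Fin n, M / n ≤ (C * φt * M ^ (w j - 1)) ^ ((1:ℝ) / w j) := by
        by_contra h
        push_neg at h
        have : (∑ j, (C * φt * M ^ (w j - 1)) ^ ((1:ℝ) / w j)) < ∑ _j : Fin n, M / n := by
          apply Finset.sum_lt_sum_of_nonempty
          · exact Finset.univ_nonempty_iff.2 (Fin.pos_iff_nonempty.1 (Nat.pos_of_ne_zero hn))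
          · intro j _; exact h j
        rw [Finset.sum_const, Finset.card_univ, Fintype.card_fin, nsmul_eq_mul,
          mul_div_cancel₀ _ (ne_of_gt hnpos)] at this
        exact absurd (hMsum.trans_lt this) (lt_irrefl M)
      obtain ⟨j, hj⟩ := hex
      set R : ℝ := C * φt * M ^ (w j - 1) with hRdef
      have hR0 : 0 ≤ R := by positivity
      have hwj : w j ≠ 0 := Nat.one_le_iff_ne_zero.1 (hw j)
      have h1 : (M / n) ^ (w j) ≤ R := by
        calc (M / n) ^ (w j) ≤ ((R ^ ((1:ℝ) / w j)) ^ (w j)) :=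
              pow_le_pow_left₀ (div_nonneg hM0 hnpos.le) hj _
          _ = R := by rw [one_div]; exact Real.rpow_inv_natCast_pow hR0 hwj
      have h2 : M ^ (w j) ≤ (n:ℝ) ^ (w j) * R := by
        rw [div_pow] at h1
        calc M ^ w j = (M ^ w j / (n:ℝ) ^ w j) * (n:ℝ) ^ w j := by
              field_simp
          _ ≤ R * (n:ℝ) ^ w j := by
              apply mul_le_mul_of_nonneg_right h1 (by positivity)
          _ = (n:ℝ) ^ (w j) * R := by ring
      have hsplit : M ^ (w j) = M * M ^ (w j - 1) := by
        conv_lhs => rw [← Nat.sub_add_cancel (hw j)]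
        rw [pow_succ]; ring
      have hMk : (0:ℝ) < M ^ (w j - 1) := pow_pos hMpos _
      have h3 : M ≤ (n:ℝ) ^ (w j) * (C * φt) := by
        have h4 : M * M ^ (w j - 1) ≤ ((n:ℝ) ^ (w j) * (C * φt)) * M ^ (w j - 1) := by
          rw [← hsplit]
          calc M ^ w j ≤ (n:ℝ) ^ (w j) * R := h2
            _ = ((n:ℝ) ^ (w j) * (C * φt)) * M ^ (w j - 1) := by rw [hRdef]; ring
        exact le_of_mul_le_mul_right h4 hMk
      have h5 : ((n:ℝ)) ^ (w j) ≤ ((n:ℝ) + 1) ^ W := by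
        have : (n:ℝ) ^ (w j) ≤ ((n:ℝ) + 1) ^ (w j) :=
          pow_le_pow_left₀ (by positivity) (by linarith) _
        refine this.trans (pow_le_pow_right₀ (by linarith) ?_)
        exact Finset.le_sup (Finset.mem_univ j)
      calc M ≤ (n:ℝ) ^ (w j) * (C * φt) := h3
        _ ≤ ((n:ℝ) + 1) ^ W * (C * φt) :=
            mul_le_mul_of_nonneg_right h5 (by positivity)
        _ ≤ (C * ((n:ℝ) + 1) ^ W + 1) * φt := by nlinarith [pow_pos (show (0:ℝ) < (n:ℝ)+1 by positivity) W]
  exact hft.trans hgoal
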